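/- arXiv:1604.08106 — 2 statements merged into one kernel-verified Lean document; each statement's English description precedes it below -/
import Mathlib

section
/- Let θ₀ > 0, β* > 0, γ > 0. Then there exists z with 1 < z < 1 + β* θ₀ e^{γ/2} such that z = 1 + β* θ(z) tanh(θ(z)), where θ(z) = θ₀ exp((γ/2)(1 − 1/z)). In other words, the steady-state equation for the pellet temperature always has at least one solution. -/
open Real

lemma continuous_tanh' : Continuous Real.tanh := by
  have : Real.tanh = fun x => Real.sinh x / Real.cosh x := by
    funext x; exact Real.tanh_eq_sinh_div_cosh x
  rw [this]
  exact Real.continuous_sinh.div Real.continuous_cosh fun x => (Real.cosh_pos x).ne'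

lemma tanh_pos_of_pos {x : ℝ} (hx : 0 < x) : 0 < Real.tanh x := by
  rw [Real.tanh_eq_sinh_div_cosh]
  exact div_pos (Real.sinh_pos_iff.2 hx) (Real.cosh_pos x)

lemma tanh_lt_one' (x : ℝ) : Real.tanh x < 1 := by
  rw [Real.tanh_eq_sinh_div_cosh]
  exact (div_lt_one (Real.cosh_pos x)).2 (Real.sinh_lt_cosh x)

/-- Existence of a steady state for the slab pellet: the equation
`z = 1 + β* θ(z) tanh(θ(z))` with `θ(z) = θ₀ exp((γ/2)(1 − 1/z))` always has a
solution with `1 < z < 1 + β* θ₀ e^{γ/2}`. -/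
theorem stmt_10 (θ₀ βstar γ : ℝ) (hθ₀ : 0 < θ₀) (hβ : 0 < βstar) (hγ : 0 < γ) :
    ∃ z : ℝ, 1 < z ∧ z < 1 + βstar * θ₀ * Real.exp (γ / 2) ∧
      z = 1 + βstar * (θ₀ * Real.exp ((γ / 2) * (1 - 1 / z))) *
            Real.tanh (θ₀ * Real.exp ((γ / 2) * (1 - 1 / z))) := by
  set M : ℝ := 1 + βstar * θ₀ * Real.exp (γ / 2) with hM
  have hM1 : 1 < M := by
    have h : 0 < βstar * θ₀ * Real.exp (γ / 2) :=
      mul_pos (mul_pos hβ hθ₀) (Real.exp_pos _)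
    exact lt_add_of_pos_right 1 h
  set θ : ℝ → ℝ := fun z => θ₀ * Real.exp ((γ / 2) * (1 - 1 / z)) with hθ
  set f : ℝ → ℝ := fun z => z - 1 - βstar * θ z * Real.tanh (θ z) with hf
  have hθpos : ∀ z, 0 < θ z := fun z => mul_pos hθ₀ (Real.exp_pos _)
  have hcont : ContinuousOn f (Set.Icc 1 M) := by
    apply ContinuousOn.sub (by fun_prop)
    have hzne : ∀ z ∈ Set.Icc (1:ℝ) M, z ≠ 0 := by
      intro z hz; have := hz.1; positivity
    have hθc : ContinuousOn θ (Set.Icc 1 M) := by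
      apply continuousOn_const.mul
      apply Real.continuous_exp.comp_continuousOn
      exact continuousOn_const.mul (continuousOn_const.sub
        (continuousOn_const.div continuousOn_id hzne))
    exact (continuousOn_const.mul hθc).mul
      (continuous_tanh'.comp_continuousOn hθc)
  have hf1 : f 1 < 0 := by
    have h1 : θ 1 = θ₀ := by simp [hθ]
    have : 0 < βstar * θ 1 * Real.tanh (θ 1) :=
      mul_pos (mul_pos hβ (hθpos 1)) (tanh_pos_of_pos (hθpos 1))
    simp only [hf]; linarith
  have hfM : 0 < f M := by
    have hMpos : (0:ℝ) < M := lt_trans one_pos hM1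
    have hθM : θ M < θ₀ * Real.exp (γ / 2) := by
      have : (γ / 2) * (1 - 1 / M) < γ / 2 := by
        have h1M : 0 < 1 / M := by positivity
        nlinarith
      exact mul_lt_mul_of_pos_left (Real.exp_lt_exp.2 this) hθ₀
    have htanh : Real.tanh (θ M) < 1 := tanh_lt_one' _
    have h1 : βstar * θ M * Real.tanh (θ M) < βstar * θ M :=
      mul_lt_of_lt_one_right (mul_pos hβ (hθpos M)) htanh
    have h2 : βstar * θ M < βstar * (θ₀ * Real.exp (γ / 2)) :=
      mul_lt_mul_of_pos_left hθM hβ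
    simp only [hf, hM]; nlinarith
  obtain ⟨z, hz, hfz⟩ := intermediate_value_Ioo (le_of_lt hM1) hcont
    (Set.mem_Ioo.2 ⟨hf1, hfM⟩)
  refine ⟨z, hz.1, hz.2, ?_⟩
  have : z - 1 - βstar * θ z * Real.tanh (θ z) = 0 := hfz
  simp only [hθ] at this
  linarith
end

section
/- Let θ₀ > 0, β* > 0, γ > 0, and suppose z > 0 satisfies z = 1 + β* θ(z) tanh(θ(z)), where θ(z) = θ₀ exp((γ/2)(1 − 1/z)). Then 1 < z < 1 + β* θ₀ e^{γ/2}. -/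
/-- A priori bounds on every steady state of the slab pellet: if `z > 0` solves
`z = 1 + β* θ(z) tanh(θ(z))` with `θ(z) = θ₀ exp((γ/2)(1 − 1/z))`, then
`1 < z < 1 + β* θ₀ e^{γ/2}`. -/
theorem stmt_11 (θ₀ βstar γ z : ℝ)
    (hθ₀ : 0 < θ₀) (hβ : 0 < βstar) (hγ : 0 < γ) (hz : 0 < z)
    (hss : z = 1 + βstar * (θ₀ * Real.exp ((γ / 2) * (1 - 1 / z))) *
        Real.tanh (θ₀ * Real.exp ((γ / 2) * (1 - 1 / z)))) :
    1 < z ∧ z < 1 + βstar * θ₀ * Real.exp (γ / 2) := by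
  set θ := θ₀ * Real.exp ((γ / 2) * (1 - 1 / z)) with hθ
  have hθpos : 0 < θ := mul_pos hθ₀ (Real.exp_pos _)
  have htanhlem : ∀ x : ℝ, 0 < x → 0 < Real.tanh x ∧ Real.tanh x < 1 := by
    intro x hx
    rw [Real.tanh_eq_sinh_div_cosh]
    have hc : 0 < Real.cosh x := Real.cosh_pos x
    constructor
    · exact div_pos (Real.sinh_pos_iff.mpr hx) hc
    · rw [div_lt_one hc, Real.sinh_eq, Real.cosh_eq]
      have := Real.exp_pos (-x)
      linarith
  have htanh : 0 < Real.tanh θ := (htanhlem θ hθpos).1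
  have h1 : 1 < z := by nlinarith [mul_pos (mul_pos hβ hθpos) htanh]
  refine ⟨h1, ?_⟩
  have hθlt : θ < θ₀ * Real.exp (γ / 2) := by
    apply mul_lt_mul_of_pos_left _ hθ₀
    apply Real.exp_lt_exp.mpr
    have : 0 < 1 / z := by positivity
    nlinarith
  have htanh1 : Real.tanh θ < 1 := (htanhlem θ hθpos).2
  nlinarith [mul_pos hβ hθpos, Real.exp_pos (γ / 2),
    mul_pos hθ₀ (Real.exp_pos (γ / 2))]
end
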